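/- A dagger category C is finitely based dagger complete if and only if C has dagger equalizers, dagger intersections, and finite dagger products. -/

import Mathlib

open CategoryTheory

universe v u v₁ u₁ v₂ u₂

class DaggerCategory (C : Type u) [Category.{v} C] where
  dag : ∀ {A B : C}, (A ⟶ B) → (B ⟶ A)
  dag_id : ∀ (A : C), dag (𝟙 A) = 𝟙 A
  dag_comp : ∀ {A B X : C} (f : A ⟶ B) (g : B ⟶ X), dag (f ≫ g) = dag g ≫ dag f
  dag_dag : ∀ {A B : C} (f : A ⟶ B), dag (dag f) = f

postfix:max "†" => DaggerCategory.dag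

section Defs

variable {C : Type u} [Category.{v} C] [DaggerCategory C]

/-- A morphism `f` is a partial isometry if `f ∘ f† ∘ f = f`. -/
def IsPartialIsometry {A B : C} (f : A ⟶ B) : Prop :=
  f ≫ f† ≫ f = f

/-- A morphism `f : A ⟶ B` is unitary if `f† ∘ f = 𝟙 A` and `f ∘ f† = 𝟙 B`. -/
def IsUnitary {A B : C} (f : A ⟶ B) : Prop :=
  f ≫ f† = 𝟙 A ∧ f† ≫ f = 𝟙 B

/-- A morphism `f` is dagger monic (an isometry) if `f† ∘ f = 𝟙`. -/
def DaggerMonic {A B : C} (f : A ⟶ B) : Prop :=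
  f ≫ f† = 𝟙 A

/-- `(L, l)` is a limit cone over the diagram `D`. -/
def IsLimitCone {J : Type u₁} [Category.{v₁} J] (D : J ⥤ C) (L : C)
    (l : ∀ j : J, L ⟶ D.obj j) : Prop :=
  (∀ {j j' : J} (f : j ⟶ j'), l j ≫ D.map f = l j') ∧
  (∀ (M : C) (m : ∀ j : J, M ⟶ D.obj j),
    (∀ {j j' : J} (f : j ⟶ j'), m j ≫ D.map f = m j') →
    ∃! g : M ⟶ L, ∀ j : J, g ≫ l j = m j)

/-- A class of objects `Ω` is weakly initial when every object admits a morphism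
from some member of `Ω`. -/
def WeaklyInitial {J : Type u₁} [Category.{v₁} J] (Ω : Set J) : Prop :=
  ∀ B : J, ∃ A ∈ Ω, Nonempty (A ⟶ B)

/-- `(L, l)` is a dagger limit of `(D, Ω)`: a limit cone whose legs at `Ω` are
partial isometries with pairwise commuting induced projections. -/
def IsDaggerLimit {J : Type u₁} [Category.{v₁} J] (D : J ⥤ C) (Ω : Set J) (L : C)
    (l : ∀ j : J, L ⟶ D.obj j) : Prop :=
  IsLimitCone D L l ∧
  (∀ j ∈ Ω, IsPartialIsometry (l j)) ∧
  (∀ j ∈ Ω, ∀ j' ∈ Ω,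
    (l j ≫ (l j)†) ≫ (l j' ≫ (l j')†) = (l j' ≫ (l j')†) ≫ (l j ≫ (l j)†))

end Defs

section MoreDefs

variable {C : Type u} [Category.{v} C] [DaggerCategory C]

/-- `e : E ⟶ A` is an equalizer of the parallel pair `f, g : A ⟶ B`. -/
def IsEqualizer {E A B : C} (e : E ⟶ A) (f g : A ⟶ B) : Prop :=
  e ≫ f = e ≫ g ∧
  ∀ {X : C} (h : X ⟶ A), h ≫ f = h ≫ g → ∃! k : X ⟶ E, k ≫ e = h

/-- `C` has dagger equalizers: every parallel pair has an equalizer that is dagger monic. -/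
def HasDaggerEqualizers (C : Type u) [Category.{v} C] [DaggerCategory C] : Prop :=
  ∀ {A B : C} (f g : A ⟶ B), ∃ (E : C) (e : E ⟶ A), IsEqualizer e f g ∧ DaggerMonic e

/-- `(P, p, q)` is a dagger pullback of the cospan `f : A ⟶ X`, `g : B ⟶ X`: a pullback whose
legs to the feet are partial isometries with commuting induced projections. -/
def IsDaggerPullback {P A B X : C} (p : P ⟶ A) (q : P ⟶ B) (f : A ⟶ X) (g : B ⟶ X) : Prop :=
  p ≫ f = q ≫ g ∧
  (∀ {Y : C} (a : Y ⟶ A) (b : Y ⟶ B), a ≫ f = b ≫ g →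
    ∃! k : Y ⟶ P, k ≫ p = a ∧ k ≫ q = b) ∧
  IsPartialIsometry p ∧ IsPartialIsometry q ∧
  (p ≫ p†) ≫ (q ≫ q†) = (q ≫ q†) ≫ (p ≫ p†)

/-- `C` has dagger pullbacks. -/
def HasDaggerPullbacks (C : Type u) [Category.{v} C] [DaggerCategory C] : Prop :=
  ∀ {A B X : C} (f : A ⟶ X) (g : B ⟶ X),
    ∃ (P : C) (p : P ⟶ A) (q : P ⟶ B), IsDaggerPullback p q f g

/-- `(P, p)` is a dagger product of the family `A`: a product whose projections are partial
isometries with pairwise commuting induced projections. -/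
def IsDaggerProduct {ι : Type u₁} (A : ι → C) (P : C) (p : ∀ i, P ⟶ A i) : Prop :=
  (∀ {Y : C} (a : ∀ i, Y ⟶ A i), ∃! k : Y ⟶ P, ∀ i, k ≫ p i = a i) ∧
  (∀ i, IsPartialIsometry (p i)) ∧
  (∀ i i', (p i ≫ (p i)†) ≫ (p i' ≫ (p i')†) = (p i' ≫ (p i')†) ≫ (p i ≫ (p i)†))

end MoreDefs

/-- A class `Ω` of objects of `J` is a basis when every object `B` admits a unique `A ∈ Ω`
with `J(A, B)` nonempty. -/
def IsBasis {J : Type u₁} [Category.{v₁} J] (Ω : Set J) : Prop :=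
  ∀ B : J, ∃! A : J, A ∈ Ω ∧ Nonempty (A ⟶ B)

/-- `C` is finitely based dagger complete: every diagram over a small category with a finite
basis `Ω` has a dagger limit relative to `Ω`. -/
def FinitelyBasedDaggerComplete (C : Type u) [Category.{v} C] [DaggerCategory C] : Prop :=
  ∀ (J : Type v) [SmallCategory J] (Ω : Set J), Ω.Finite → IsBasis Ω →
    ∀ D : J ⥤ C, ∃ (L : C) (l : ∀ j : J, L ⟶ D.obj j), IsDaggerLimit D Ω L l

section
variable {C : Type u} [Category.{v} C] [DaggerCategory C]

/-- `(P, p, b)` is a wide pullback of the family `m i : A i ⟶ B`. -/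
def IsWidePullback {ι : Type v} {B : C} {A : ι → C} (m : ∀ i, A i ⟶ B)
    (P : C) (p : ∀ i, P ⟶ A i) (b : P ⟶ B) : Prop :=
  (∀ i, p i ≫ m i = b) ∧
  ∀ {Y : C} (q : ∀ i, Y ⟶ A i) (c : Y ⟶ B), (∀ i, q i ≫ m i = c) →
    ∃! k : Y ⟶ P, (∀ i, k ≫ p i = q i) ∧ k ≫ b = c

end

/-- `C` has dagger intersections: every family of dagger monomorphisms into `B` has a wide
pullback all of whose legs to the `A i` are dagger monic. -/
def HasDaggerIntersections (C : Type u) [Category.{v} C] [DaggerCategory C] : Prop :=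
  ∀ (ι : Type v) (B : C) (A : ι → C) (m : ∀ i, A i ⟶ B), (∀ i, DaggerMonic (m i)) →
    ∃ (P : C) (p : ∀ i, P ⟶ A i) (b : P ⟶ B),
      IsWidePullback m P p b ∧ ∀ i, DaggerMonic (p i)

/-- `C` has finite dagger products. -/
def HasFiniteDaggerProducts (C : Type u) [Category.{v} C] [DaggerCategory C] : Prop :=
  ∀ (ι : Type v) [Finite ι] (A : ι → C),
    ∃ (P : C) (p : ∀ i, P ⟶ A i), IsDaggerProduct A P p

section Proof

open CategoryTheory.Limits DaggerCategory

variable {C : Type u} [Category.{v} C] [DaggerCategory C]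

lemma DaggerMonic.cancel {A B : C} {f : A ⟶ B} (hf : DaggerMonic f) {Y : C} {g h : Y ⟶ A}
    (H : g ≫ f = h ≫ f) : g = h := by
  calc g = g ≫ (f ≫ f†) := by rw [hf, Category.comp_id]
    _ = (g ≫ f) ≫ f† := by rw [Category.assoc]
    _ = (h ≫ f) ≫ f† := by rw [H]
    _ = h ≫ (f ≫ f†) := by rw [Category.assoc]
    _ = h := by rw [hf, Category.comp_id]

lemma DaggerMonic.partialIso {A B : C} {f : A ⟶ B} (hf : DaggerMonic f) :
    IsPartialIsometry f := by
  show f ≫ f† ≫ f = f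
  rw [← Category.assoc, hf, Category.id_comp]

lemma pIso_comp_daggerMonic {X Y Z : C} {x : X ⟶ Y} {e : Y ⟶ Z}
    (hx : IsPartialIsometry x) (he : DaggerMonic e) : IsPartialIsometry (x ≫ e) := by
  show (x ≫ e) ≫ (x ≫ e)† ≫ (x ≫ e) = x ≫ e
  rw [dag_comp]
  calc (x ≫ e) ≫ (e† ≫ x†) ≫ x ≫ e
      = x ≫ (e ≫ e†) ≫ (x† ≫ x ≫ e) := by simp only [Category.assoc]
    _ = x ≫ x† ≫ x ≫ e := by rw [he, Category.id_comp]
    _ = (x ≫ x† ≫ x) ≫ e := by simp only [Category.assoc]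
    _ = x ≫ e := by rw [hx]

lemma proj_comp_daggerMonic {X Y Z : C} (x : X ⟶ Y) {e : Y ⟶ Z} (he : DaggerMonic e) :
    (x ≫ e) ≫ (x ≫ e)† = x ≫ x† := by
  rw [dag_comp]
  calc (x ≫ e) ≫ e† ≫ x† = x ≫ (e ≫ e†) ≫ x† := by simp only [Category.assoc]
    _ = x ≫ x† := by rw [he, Category.id_comp]

/-- Joint dagger equalizers from binary dagger equalizers and dagger intersections. -/
lemma joint_dagger_equalizer (hE : HasDaggerEqualizers C) (hI : HasDaggerIntersections C)
    (ι : Type v) [Nonempty ι] (X : C) (T : ι → C) (f g : ∀ i, X ⟶ T i) :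
    ∃ (P : C) (b : P ⟶ X), DaggerMonic b ∧ (∀ i, b ≫ f i = b ≫ g i) ∧
      ∀ (Y : C) (h : Y ⟶ X), (∀ i, h ≫ f i = h ≫ g i) → ∃! k : Y ⟶ P, k ≫ b = h := by
  choose E e he using fun i => hE (f i) (g i)
  have hEq : ∀ i, IsEqualizer (e i) (f i) (g i) := fun i => (he i).1
  have hMon : ∀ i, DaggerMonic (e i) := fun i => (he i).2
  obtain ⟨P, p, b, hWP, hpMon⟩ := hI ι X E e hMon
  have hb : ∀ i, p i ≫ e i = b := hWP.1
  have i₀ := Classical.arbitrary ι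
  have hbMon : DaggerMonic b := by
    rw [← hb i₀]
    show (p i₀ ≫ e i₀) ≫ (p i₀ ≫ e i₀)† = 𝟙 P
    rw [proj_comp_daggerMonic _ (hMon i₀)]
    exact hpMon i₀
  refine ⟨P, b, hbMon, fun i => ?_, fun Y h hh => ?_⟩
  · rw [← hb i, Category.assoc, Category.assoc, (hEq i).1]
  · choose q hq hq' using fun i => (hEq i).2 h (hh i)
    obtain ⟨k, ⟨hk1, hk2⟩, hk3⟩ := hWP.2 q h hq
    refine ⟨k, hk2, fun k' hk' => hk3 k' ⟨fun i => ?_, hk'⟩⟩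
    refine hq' i (k' ≫ p i) ?_
    show (k' ≫ p i) ≫ e i = h
    rw [Category.assoc, hb i]
    exact hk'

end Proof

/-- A dagger category is finitely based dagger complete iff it has dagger
equalizers, dagger intersections and finite dagger products. -/
theorem finitelyBasedDaggerComplete_iff
    (C : Type u) [Category.{v} C] [DaggerCategory C] :
    FinitelyBasedDaggerComplete C ↔
      HasDaggerEqualizers C ∧ HasDaggerIntersections C ∧ HasFiniteDaggerProducts C := by
  open CategoryTheory.Limits DaggerCategory WalkingParallelFamily in
  constructor
  · -- completeness gives the three kinds of dagger limits
    intro hc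
    refine ⟨?_, ?_, ?_⟩
    · -- dagger equalizers
      intro A B f g
      obtain ⟨L, l, hlim, hpi, -⟩ := hc (WalkingParallelFamily (ULift.{v} Bool))
        {WalkingParallelFamily.zero} (Set.finite_singleton _)
        (by
          intro B'
          refine ⟨WalkingParallelFamily.zero, ⟨rfl, ?_⟩, ?_⟩
          · cases B' with
            | zero => exact ⟨𝟙 _⟩
            | one => exact ⟨WalkingParallelFamily.Hom.line (ULift.up true)⟩
          · rintro A' ⟨hA', -⟩
            exact hA')
        (parallelFamily (fun x : ULift Bool => if x.down then f else g))
      obtain ⟨hcone, huniv⟩ := hlim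
      have hf : l zero ≫ f = l one := by
        exact hcone (WalkingParallelFamily.Hom.line (ULift.up true))
      have hg : l zero ≫ g = l one := by
        exact hcone (WalkingParallelFamily.Hom.line (ULift.up false))
      have emono : ∀ {Y : C} (x y : Y ⟶ L), x ≫ l zero = y ≫ l zero → x = y := by
        intro Y x y hxy
        obtain ⟨k, hk, hk'⟩ := huniv Y (fun j => x ≫ l j)
          (fun {j j'} t => by rw [Category.assoc, hcone t])
        have h1 : x = k := hk' x (fun j => rfl)
        have h2 : y = k := by
          refine hk' y (fun j => ?_)
          cases j with
          | zero => exact hxy.symm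
          | one =>
            erw [← hf, ← Category.assoc, ← Category.assoc, hxy]
        rw [h1, h2]
      have hmon : DaggerMonic (l zero) := by
        refine emono _ _ ?_
        have := hpi zero rfl
        show (l zero ≫ (l zero)†) ≫ l zero = 𝟙 L ≫ l zero
        rw [Category.assoc, this, Category.id_comp]
      refine ⟨L, l zero, ⟨by erw [hf, hg], ?_⟩, hmon⟩
      intro X h hh
      obtain ⟨k, hk, hk'⟩ := huniv X
        (fun j => WalkingParallelFamily.casesOn j h (h ≫ f))
        (by
          intro j j' t
          change WalkingParallelFamily.Hom _ j j' at t
          cases t with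
          | id X' =>
            rw [WalkingParallelFamily.hom_id, CategoryTheory.Functor.map_id, Category.comp_id]
          | line x =>
            obtain ⟨x⟩ := x
            cases x with
            | true => simp
            | false => simpa using hh.symm)
      refine ⟨k, hk zero, fun k' hk'e => hk' k' ?_⟩
      intro j
      cases j with
      | zero => exact hk'e
      | one =>
        have : k' ≫ l zero ≫ f = h ≫ f := by erw [← Category.assoc, hk'e]; rfl
        erw [← hf, this]; rfl
    · -- dagger intersections
      intro ι B A m hm
      obtain ⟨L, l, hlim, hpi, -⟩ := hc (WalkingParallelFamily (Option ι))
        {WalkingParallelFamily.zero} (Set.finite_singleton _)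
        (by
          intro B'
          refine ⟨WalkingParallelFamily.zero, ⟨rfl, ?_⟩, ?_⟩
          · cases B' with
            | zero => exact ⟨𝟙 _⟩
            | one => exact ⟨WalkingParallelFamily.Hom.line none⟩
          · rintro A' ⟨hA', -⟩
            exact hA')
        (parallelFamily (fun o : Option ι => o.elim (𝟙 B) (fun i => (m i)† ≫ m i)))
      obtain ⟨hcone, huniv⟩ := hlim
      have hnone : l zero = l one := by
        exact (Category.comp_id (l zero)).symm.trans
          (hcone (WalkingParallelFamily.Hom.line (none : Option ι)))
      have hsome : ∀ i, l zero ≫ (m i)† ≫ m i = l zero := by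
        intro i
        have h1 : l zero ≫ (m i)† ≫ m i = l one :=
          hcone (WalkingParallelFamily.Hom.line (some i))
        rw [h1, hnone]
      have emono : ∀ {Y : C} (x y : Y ⟶ L), x ≫ l zero = y ≫ l zero → x = y := by
        intro Y x y hxy
        obtain ⟨k, hk, hk'⟩ := huniv Y (fun j => x ≫ l j)
          (fun {j j'} t => by rw [Category.assoc, hcone t])
        have h1 : x = k := hk' x (fun j => rfl)
        have h2 : y = k := by
          refine hk' y (fun j => ?_)
          cases j with
          | zero => exact hxy.symm
          | one => erw [← hnone, hxy.symm]; rfl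
        rw [h1, h2]
      have hmon : DaggerMonic (l zero) := by
        refine emono _ _ ?_
        have := hpi zero rfl
        show (l zero ≫ (l zero)†) ≫ l zero = 𝟙 L ≫ l zero
        rw [Category.assoc, this, Category.id_comp]
      refine ⟨L, fun i => l zero ≫ (m i)†, l zero, ⟨fun i => by
        rw [Category.assoc, hsome i], ?_⟩, fun i => ?_⟩
      · intro Y q c hq
        have hcsome : ∀ i, c ≫ (m i)† ≫ m i = c := by
          intro i
          calc c ≫ (m i)† ≫ m i = q i ≫ (m i ≫ (m i)†) ≫ m i := by
                rw [← hq i]; simp only [Category.assoc]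
            _ = q i ≫ m i := by rw [hm i, Category.id_comp]
            _ = c := hq i
        obtain ⟨k, hk, hk'⟩ := huniv Y (fun j => WalkingParallelFamily.casesOn j c c)
          (by
            intro j j' t
            change WalkingParallelFamily.Hom _ j j' at t
            cases t with
            | id X' =>
              rw [WalkingParallelFamily.hom_id, CategoryTheory.Functor.map_id, Category.comp_id]
            | line o =>
              cases o with
              | none => simp
              | some i => exact hcsome i)
        refine ⟨k, ⟨fun i => ?_, hk zero⟩, ?_⟩
        · erw [← Category.assoc, hk zero, ← hq i, Category.assoc, hm i, Category.comp_id]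
        · rintro k' ⟨-, hk'b⟩
          refine hk' k' ?_
          intro j
          cases j with
          | zero => exact hk'b
          | one => erw [← hnone, hk'b]
      · show (l zero ≫ (m i)†) ≫ (l zero ≫ (m i)†)† = 𝟙 L
        erw [dag_comp, dag_dag]
        calc (l zero ≫ (m i)†) ≫ m i ≫ (l zero)†
            = (l zero ≫ (m i)† ≫ m i) ≫ (l zero)† := by simp only [Category.assoc]
          _ = l zero ≫ (l zero)† := by rw [hsome i]; rfl
          _ = 𝟙 L := hmon
    · -- finite dagger products
      intro ι _ A
      have : Finite (Discrete ι) := Finite.of_equiv ι discreteEquiv.symm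
      obtain ⟨L, l, hlim, hpi, hcom⟩ := hc (Discrete ι) Set.univ Set.finite_univ
        (by
          intro B
          refine ⟨B, ⟨trivial, ⟨𝟙 B⟩⟩, ?_⟩
          rintro A' ⟨-, ⟨t⟩⟩
          exact Discrete.ext (Discrete.eq_of_hom t))
        (Discrete.functor A)
      refine ⟨L, fun i => l ⟨i⟩, ?_, fun i => hpi ⟨i⟩ trivial, fun i i' => hcom ⟨i⟩ trivial ⟨i'⟩ trivial⟩
      intro Y a
      obtain ⟨k, hk, hk'⟩ := hlim.2 Y (fun j => a j.as)
        (by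
          rintro ⟨j⟩ ⟨j'⟩ t
          obtain rfl : j = j' := Discrete.eq_of_hom t
          rw [Discrete.functor_map_id, Category.comp_id])
      exact ⟨k, fun i => hk ⟨i⟩, fun k' hk'' => hk' k' (fun j => hk'' j.as)⟩
  · -- the three kinds of dagger limits give completeness
    rintro ⟨hE, hI, hP⟩
    intro J _ Ω hfin hbasis D
    have hbasis' : ∀ j : J, ∃ A : J, (A ∈ Ω ∧ Nonempty (A ⟶ j)) ∧
        ∀ A' : J, A' ∈ Ω → Nonempty (A' ⟶ j) → A' = A := by
      intro j
      obtain ⟨A, hA, hA'⟩ := hbasis j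
      exact ⟨A, hA, fun A' h1 h2 => hA' A' ⟨h1, h2⟩⟩
    choose β hβ huniq using hbasis'
    have hmem : ∀ j, β j ∈ Ω := fun j => (hβ j).1
    have hne : ∀ j, Nonempty (β j ⟶ j) := fun j => (hβ j).2
    have key : ∀ A : J, ∃ (P : C) (b : P ⟶ D.obj A), DaggerMonic b ∧
        (∀ s : Σ j : J, (A ⟶ j) × (A ⟶ j), b ≫ D.map s.2.1 = b ≫ D.map s.2.2) ∧
        ∀ (Y : C) (h : Y ⟶ D.obj A), (∀ s : Σ j : J, (A ⟶ j) × (A ⟶ j),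
          h ≫ D.map s.2.1 = h ≫ D.map s.2.2) → ∃! k : Y ⟶ P, k ≫ b = h := by
      intro A
      have : Nonempty (Σ j : J, (A ⟶ j) × (A ⟶ j)) := ⟨⟨A, 𝟙 A, 𝟙 A⟩⟩
      exact joint_dagger_equalizer hE hI (Σ j : J, (A ⟶ j) × (A ⟶ j)) (D.obj A)
        (fun s => D.obj s.1) (fun s => D.map s.2.1) (fun s => D.map s.2.2)
    choose P b hbMon hbEq hbUniv using key
    have : Finite ↥Ω := hfin.to_subtype
    obtain ⟨L, π, hprod⟩ := hP ↥Ω (fun A => P (A : J))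
    have hβΩ : ∀ j, β j ∈ Ω := hmem
    have φ : ∀ j, (β j ⟶ j) := fun j => (hne j).some
    refine ⟨L, fun j => π ⟨β j, hβΩ j⟩ ≫ b (β j) ≫ D.map (φ j), ?_⟩
    have leg_eq : ∀ (j : J) (A : ↥Ω) (f : (A : J) ⟶ j),
        π ⟨β j, hβΩ j⟩ ≫ b (β j) ≫ D.map (φ j) = π A ≫ b (A : J) ≫ D.map f := by
      intro j A f
      have h : A = (⟨β j, hβΩ j⟩ : ↥Ω) := Subtype.ext (huniq j A A.2 ⟨f⟩)
      subst h
      exact congrArg (fun t => π ⟨β j, hβΩ j⟩ ≫ t) (hbEq (β j) ⟨j, φ j, f⟩)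
    have leg_eq' : ∀ (j : J) (hj : j ∈ Ω),
        π ⟨β j, hβΩ j⟩ ≫ b (β j) ≫ D.map (φ j) = π ⟨j, hj⟩ ≫ b j := by
      intro j hj
      rw [leg_eq j ⟨j, hj⟩ (𝟙 j), CategoryTheory.Functor.map_id, Category.comp_id]
    refine ⟨⟨?_, ?_⟩, ?_, ?_⟩
    · -- cone condition
      intro j j' u
      dsimp only
      rw [leg_eq j' ⟨β j, hβΩ j⟩ (φ j ≫ u)]
      simp only [CategoryTheory.Functor.map_comp, Category.assoc]
    · -- universality
      intro M m hm
      have hq : ∀ A : ↥Ω, ∃! k : M ⟶ P (A : J), k ≫ b (A : J) = m (A : J) := by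
        intro A
        exact hbUniv (A : J) M (m (A : J)) (fun s => by rw [hm s.2.1, hm s.2.2])
      choose q hq1 hq2 using hq
      obtain ⟨k, hk, hk'⟩ := hprod.1 q
      refine ⟨k, fun j => ?_, fun k' hk'' => ?_⟩
      · rw [← Category.assoc, hk ⟨β j, hβΩ j⟩, ← Category.assoc, hq1 ⟨β j, hβΩ j⟩,
          hm (φ j)]
      · refine hk' k' (fun A => ?_)
        refine hq2 A (k' ≫ π A) ?_
        show (k' ≫ π A) ≫ b (A : J) = m (A : J)
        have := hk'' (A : J)
        dsimp only at this
        rw [leg_eq (A : J) A (𝟙 (A : J)), CategoryTheory.Functor.map_id, Category.comp_id,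
          ← Category.assoc] at this
        exact this
    · -- legs at Ω are partial isometries
      intro j hj
      show IsPartialIsometry (π ⟨β j, hβΩ j⟩ ≫ b (β j) ≫ D.map (φ j))
      rw [leg_eq' j hj]
      exact pIso_comp_daggerMonic (hprod.2.1 ⟨j, hj⟩) (hbMon j)
    · -- commuting projections
      intro j hj j' hj'
      dsimp only
      rw [leg_eq' j hj, leg_eq' j' hj',
        proj_comp_daggerMonic _ (hbMon j), proj_comp_daggerMonic _ (hbMon j')]
      exact hprod.2.2 ⟨j, hj⟩ ⟨j', hj'⟩
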